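/- Let I be an ideal in the formal power series ring K[[x1,...,xn]] over a field K, where monomials are ordered by the total ordering induced by (|α|, α1, ..., αn) lexicographically. Then for every k ∈ ℕ, the Hilbert-Samuel function satisfies H_I(k) = H_{mon(I)}(k), where mon(I) is the ideal generated by the initial monomials of nonzero elements of I; equivalently, H_I(k) equals the number of exponents α ∈ ℕⁿ with α ∉ N(I) and |α| ≤ k, where N(I) is the diagram of initial exponents of I. -/

import Mathlib

open MvPowerSeries

namespace Stmt8Aux

variable {n : ℕ}

/-- degree of an exponent -/
def dg (α : Fin n →₀ ℕ) : ℕ := α.sum fun _ v => v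

/-- key for the monomial order -/
def key (α : Fin n →₀ ℕ) : ℕ ×ₗ Lex (Fin n → ℕ) := toLex (dg α, toLex ⇑α)

theorem dg_add (α β : Fin n →₀ ℕ) : dg (α + β) = dg α + dg β := by
  classical
  simpa [dg] using Finsupp.sum_add_index (f := α) (g := β)
    (h := fun _ v => v) (by simp) (by simp)

theorem apply_le_dg (α : Fin n →₀ ℕ) (i : Fin n) : α i ≤ dg α := by
  classical
  by_cases h : i ∈ α.support
  · exact Finset.single_le_sum (f := fun j => α j) (fun _ _ => Nat.zero_le _) h
  · simp [Finsupp.notMem_support_iff.1 h]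

theorem dg_eq_zero {α : Fin n →₀ ℕ} (h : dg α = 0) : α = 0 := by
  ext i
  simpa using Nat.le_zero.1 (h ▸ apply_le_dg α i)

theorem key_injective : Function.Injective (key (n := n)) := by
  intro α β h
  have h2 : toLex ⇑α = toLex ⇑β := congrArg (fun p => (ofLex p).2) h
  exact DFunLike.coe_injective (toLex_inj.1 h2)

theorem key_le_iff {α β : Fin n →₀ ℕ} :
    key α ≤ key β ↔ dg α < dg β ∨ (dg α = dg β ∧ toLex ⇑α ≤ toLex ⇑β) := by
  exact Prod.Lex.le_iff

theorem key_lt_iff {α β : Fin n →₀ ℕ} :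
    key α < key β ↔ dg α < dg β ∨ (dg α = dg β ∧ toLex ⇑α < toLex ⇑β) := by
  exact Prod.Lex.lt_iff

theorem dg_le_of_key_le {α β : Fin n →₀ ℕ} (h : key α ≤ key β) : dg α ≤ dg β := by
  rcases key_le_iff.1 h with h | h
  · exact h.le
  · exact h.1.le

theorem key_lt_of_dg_lt {α β : Fin n →₀ ℕ} (h : dg α < dg β) : key α < key β :=
  key_lt_iff.2 (Or.inl h)

theorem pilex_le_iff {a b : Lex (Fin n → ℕ)} : a ≤ b ↔ (a = b ∨ a < b) := Iff.rfl

theorem pilex_add_lt_iff (c : Fin n → ℕ) {a b : Fin n → ℕ} :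
    toLex (c + a) < toLex (c + b) ↔ toLex a < toLex b := by
  constructor
  · rintro ⟨i, hj, hi⟩
    refine ⟨i, fun j hij => ?_, ?_⟩
    · have := hj j hij
      simp only [Pi.toLex_apply, Pi.add_apply] at this ⊢
      omega
    · simp only [Pi.toLex_apply, Pi.add_apply] at hi ⊢
      omega
  · rintro ⟨i, hj, hi⟩
    refine ⟨i, fun j hij => ?_, ?_⟩
    · have := hj j hij
      simp only [Pi.toLex_apply, Pi.add_apply] at this ⊢
      omega
    · simp only [Pi.toLex_apply, Pi.add_apply] at hi ⊢
      omega

theorem pilex_add_le_iff (c : Fin n → ℕ) {a b : Fin n → ℕ} :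
    toLex (c + a) ≤ toLex (c + b) ↔ toLex a ≤ toLex b := by
  rw [pilex_le_iff, pilex_le_iff, pilex_add_lt_iff]
  constructor
  · rintro (h | h)
    · left
      have h1 : c + a = c + b := toLex_inj.1 h
      have h2 : a = b := by
        funext i
        have := congrFun h1 i
        simp only [Pi.add_apply] at this
        omega
      rw [h2]
    · exact Or.inr h
  · rintro (h | h)
    · exact Or.inl (by rw [toLex_inj.1 h])
    · exact Or.inr h

theorem key_add_le_iff (γ : Fin n →₀ ℕ) {α β : Fin n →₀ ℕ} :
    key (γ + α) ≤ key (γ + β) ↔ key α ≤ key β := by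
  rw [key_le_iff, key_le_iff, dg_add, dg_add]
  rw [Finsupp.coe_add, Finsupp.coe_add, pilex_add_le_iff]
  have h1 : dg γ + dg α < dg γ + dg β ↔ dg α < dg β := by omega
  have h2 : dg γ + dg α = dg γ + dg β ↔ dg α = dg β := by omega
  rw [h1, h2]


theorem pilex_trichot (a b : Fin n → ℕ) :
    toLex a < toLex b ∨ a = b ∨ toLex b < toLex a := by
  rcases lt_trichotomy (toLex a) (toLex b) with h | h | h
  · exact Or.inl h
  · exact Or.inr (Or.inl (toLex_inj.1 h))
  · exact Or.inr (Or.inr h)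

theorem pilex_lt_asymm {a b : Fin n → ℕ} (h : toLex a < toLex b) : ¬ toLex b < toLex a := by
  intro h2
  exact (lt_irrefl (a := toLex a)) (trans_of _ h h2)

theorem pilex_lt_irrefl (a : Fin n → ℕ) : ¬ toLex a < toLex a :=
  fun h => (irrefl_of _ _ : ¬ _ ) h

theorem pilex_lt_trans {a b c : Fin n → ℕ} (h1 : toLex a < toLex b) (h2 : toLex b < toLex c) :
    toLex a < toLex c := trans_of _ h1 h2

theorem pilex_le_trans {a b c : Fin n → ℕ} (h1 : toLex a ≤ toLex b) (h2 : toLex b ≤ toLex c) :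
    toLex a ≤ toLex c := by
  rcases pilex_le_iff.1 h1 with h | h
  · rw [toLex_inj.1 h]; exact h2
  · rcases pilex_le_iff.1 h2 with h' | h'
    · rw [← toLex_inj.1 h']; exact pilex_le_iff.2 (Or.inr h)
    · exact pilex_le_iff.2 (Or.inr (pilex_lt_trans h h'))

theorem pilex_lt_iff_not_le {a b : Fin n → ℕ} : toLex a < toLex b ↔ ¬ toLex b ≤ toLex a := by
  constructor
  · intro h hle
    rcases pilex_le_iff.1 hle with h' | h'
    · rw [toLex_inj.1 h'] at h; exact pilex_lt_irrefl _ h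
    · exact pilex_lt_asymm h h'
  · intro h
    rcases pilex_trichot a b with h' | h' | h'
    · exact h'
    · exact absurd (pilex_le_iff.2 (Or.inl (by rw [h']))) h
    · exact absurd (pilex_le_iff.2 (Or.inr h')) h

theorem pilex_le_total (a b : Fin n → ℕ) : toLex a ≤ toLex b ∨ toLex b ≤ toLex a := by
  rcases pilex_trichot a b with h | h | h
  · exact Or.inl (pilex_le_iff.2 (Or.inr h))
  · exact Or.inl (pilex_le_iff.2 (Or.inl (by rw [h])))
  · exact Or.inr (pilex_le_iff.2 (Or.inr h))

theorem kle_refl (α : Fin n →₀ ℕ) : key α ≤ key α :=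
  key_le_iff.2 (Or.inr ⟨rfl, pilex_le_iff.2 (Or.inl rfl)⟩)

theorem kle_trans {α β γ : Fin n →₀ ℕ} (h1 : key α ≤ key β) (h2 : key β ≤ key γ) :
    key α ≤ key γ := by
  rcases key_le_iff.1 h1 with h | h <;> rcases key_le_iff.1 h2 with h' | h' <;>
    refine key_le_iff.2 ?_
  · exact Or.inl (h.trans h')
  · exact Or.inl (h'.1 ▸ h)
  · exact Or.inl (h.1 ▸ h')
  · exact Or.inr ⟨h.1.trans h'.1, pilex_le_trans h.2 h'.2⟩

theorem kle_total (α β : Fin n →₀ ℕ) : key α ≤ key β ∨ key β ≤ key α := by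
  rcases Nat.lt_trichotomy (dg α) (dg β) with h | h | h
  · exact Or.inl (key_le_iff.2 (Or.inl h))
  · rcases pilex_le_total (⇑α) (⇑β) with h' | h'
    · exact Or.inl (key_le_iff.2 (Or.inr ⟨h, h'⟩))
    · exact Or.inr (key_le_iff.2 (Or.inr ⟨h.symm, h'⟩))
  · exact Or.inr (key_le_iff.2 (Or.inl h))

theorem klt_iff_not_kle {α β : Fin n →₀ ℕ} : key α < key β ↔ ¬ key β ≤ key α := by
  rw [key_lt_iff, key_le_iff]
  constructor
  · rintro (h | ⟨h1, h2⟩) <;> rintro (h' | ⟨h1', h2'⟩)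
    · omega
    · omega
    · omega
    · exact (pilex_lt_iff_not_le.1 h2) h2'
  · intro h
    rcases Nat.lt_trichotomy (dg α) (dg β) with h1 | h1 | h1
    · exact Or.inl h1
    · refine Or.inr ⟨h1, pilex_lt_iff_not_le.2 fun hba => h (Or.inr ⟨h1.symm, hba⟩)⟩
    · exact absurd (Or.inl h1) h

theorem kle_of_klt {α β : Fin n →₀ ℕ} (h : key α < key β) : key α ≤ key β := by
  rcases kle_total α β with h' | h'
  · exact h'
  · exact absurd h' (klt_iff_not_kle.1 h)

theorem klt_of_klt_of_kle {α β γ : Fin n →₀ ℕ} (h1 : key α < key β) (h2 : key β ≤ key γ) :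
    key α < key γ := by
  rw [klt_iff_not_kle] at h1 ⊢
  exact fun h => h1 (kle_trans h2 h)

theorem klt_of_kle_of_klt {α β γ : Fin n →₀ ℕ} (h1 : key α ≤ key β) (h2 : key β < key γ) :
    key α < key γ := by
  rw [klt_iff_not_kle] at h2 ⊢
  exact fun h => h2 (kle_trans h h1)

theorem key_antisymm {α β : Fin n →₀ ℕ} (h1 : key α ≤ key β) (h2 : key β ≤ key α) : α = β := by
  have hd : dg α = dg β := le_antisymm (dg_le_of_key_le h1) (dg_le_of_key_le h2)
  have hl1 : toLex ⇑α ≤ toLex ⇑β := by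
    rcases key_le_iff.1 h1 with h | h
    · omega
    · exact h.2
  have hl2 : toLex ⇑β ≤ toLex ⇑α := by
    rcases key_le_iff.1 h2 with h | h
    · omega
    · exact h.2
  have : ⇑α = ⇑β := by
    rcases pilex_le_iff.1 hl1 with h | h
    · exact toLex_inj.1 h
    · rcases pilex_le_iff.1 hl2 with h' | h'
      · exact (toLex_inj.1 h').symm
      · exact absurd h' (pilex_lt_asymm h)
  exact DFunLike.coe_injective this

theorem key_trichot (α β : Fin n →₀ ℕ) : key α < key β ∨ α = β ∨ key β < key α := by
  by_cases he : α = β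
  · exact Or.inr (Or.inl he)
  rcases kle_total α β with h | h
  · refine Or.inl (klt_iff_not_kle.2 fun hba => he (key_antisymm h hba))
  · exact Or.inr (Or.inr (klt_iff_not_kle.2 fun hab => he (key_antisymm hab h)))

theorem finite_dg_le (k : ℕ) : {α : Fin n →₀ ℕ | dg α ≤ k}.Finite := by
  classical
  have hsub : {α : Fin n →₀ ℕ | dg α ≤ k} ⊆
      Set.Iic (Finsupp.equivFunOnFinite.symm fun _ => k) := by
    intro α hα i
    simpa using le_trans (apply_le_dg α i) hα
  exact (Set.finite_Iic _).subset hsub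

theorem finset_key_min (s : Finset (Fin n →₀ ℕ)) (hs : s.Nonempty) :
    ∃ α ∈ s, ∀ β ∈ s, key α ≤ key β := by
  classical
  induction s using Finset.cons_induction with
  | empty => simp at hs
  | cons a s ha ih =>
    rcases s.eq_empty_or_nonempty with rfl | hs'
    · exact ⟨a, by simp, by intro β hβ; simp at hβ; rw [hβ]⟩
    · obtain ⟨α, hα, hmin⟩ := ih hs'
      rcases kle_total a α with h | h
      · refine ⟨a, Finset.mem_cons_self _ _, fun β hβ => ?_⟩
        rcases Finset.mem_cons.1 hβ with rfl | hβ
        · exact kle_refl _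
        · exact kle_trans h (hmin β hβ)
      · refine ⟨α, Finset.mem_cons_of_mem hα, fun β hβ => ?_⟩
        rcases Finset.mem_cons.1 hβ with rfl | hβ
        · exact h
        · exact hmin β hβ

theorem exists_key_min {S : Set (Fin n →₀ ℕ)} (hS : S.Nonempty) :
    ∃ α ∈ S, ∀ β ∈ S, key α ≤ key β := by
  classical
  obtain ⟨β₀, hβ₀⟩ := hS
  have hfin : {β ∈ S | key β ≤ key β₀}.Finite :=
    (finite_dg_le (dg β₀)).subset fun β hβ => dg_le_of_key_le hβ.2
  have hne : hfin.toFinset.Nonempty := ⟨β₀, by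
    rw [Set.Finite.mem_toFinset]
    exact ⟨hβ₀, kle_refl _⟩⟩
  obtain ⟨α, hα, hmin⟩ := finset_key_min hfin.toFinset hne
  rw [Set.Finite.mem_toFinset] at hα
  refine ⟨α, hα.1, fun β hβ => ?_⟩
  rcases kle_total β β₀ with h | h
  · exact hmin β (by rw [Set.Finite.mem_toFinset]; exact ⟨hβ, h⟩)
  · exact kle_trans hα.2 h

theorem dg_single (i : Fin n) (c : ℕ) : dg (Finsupp.single i c) = c := by
  classical
  simp [dg, Finsupp.sum_single_index]

section Series

variable {K : Type*} [Field K]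

/-- the maximal ideal -/
noncomputable def mI (K : Type*) [Field K] (n : ℕ) : Ideal (MvPowerSeries (Fin n) K) :=
  Ideal.span (Set.range (X : Fin n → MvPowerSeries (Fin n) K))

theorem coeff_eq_zero_of_mem_mI_pow {m : ℕ} {f : MvPowerSeries (Fin n) K}
    (hf : f ∈ (mI K n) ^ m) : ∀ α, dg α < m → coeff α f = 0 := by
  classical
  induction m generalizing f with
  | zero => intro α h; omega
  | succ m ih =>
    rw [pow_succ] at hf
    refine Submodule.mul_induction_on hf ?_ ?_
    · intro g hg h hh α hα
      rw [coeff_mul]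
      refine Finset.sum_eq_zero fun p hp => ?_
      rw [Finset.HasAntidiagonal.mem_antidiagonal] at hp
      by_cases h1 : dg p.1 < m
      · rw [ih hg p.1 h1, zero_mul]
      · have hd : dg p.1 + dg p.2 = dg α := by rw [← dg_add, hp]
        have h2 : p.2 = 0 := dg_eq_zero (by omega)
        rw [h2, coeff_zero_eq_constantCoeff_apply]
        have hker : constantCoeff h = 0 := by
          have hle : mI K n ≤ RingHom.ker (constantCoeff : MvPowerSeries (Fin n) K →+* K) := by
            rw [mI, Ideal.span_le]
            rintro _ ⟨i, rfl⟩
            simp [RingHom.mem_ker, constantCoeff_X]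
          exact hle hh
        rw [hker, mul_zero]
    · intro x y hx hy α hα
      rw [map_add, hx α hα, hy α hα, add_zero]

theorem mem_mI_pow_of {m : ℕ} {f : MvPowerSeries (Fin n) K}
    (hf : ∀ α, dg α < m → coeff α f = 0) : f ∈ (mI K n) ^ m := by
  classical
  induction m generalizing f with
  | zero => simp
  | succ m ih =>
    set g : Fin n → MvPowerSeries (Fin n) K := fun i γ =>
      if (γ + Finsupp.single i 1).support.min = (i : WithTop (Fin n)) then
        coeff (γ + Finsupp.single i 1) f else 0 with hg
    have hcoeff : ∀ (i : Fin n) (γ : Fin n →₀ ℕ), coeff γ (g i) =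
        if (γ + Finsupp.single i 1).support.min = (i : WithTop (Fin n)) then
          coeff (γ + Finsupp.single i 1) f else 0 := fun i γ => rfl
    have heq : f = ∑ i, X i * g i := by
      ext α
      rw [map_sum]
      have hterm : ∀ i : Fin n, coeff α (X i * g i) =
          if Finsupp.single i 1 ≤ α then coeff (α - Finsupp.single i 1) (g i) else 0 := by
        intro i
        rw [X_def, coeff_monomial_mul]
        split_ifs <;> simp
      by_cases hα : α = 0
      · subst hα
        have : ∀ i : Fin n, coeff (0 : Fin n →₀ ℕ) (X i * g i) = 0 := by
          intro i
          rw [hterm i, if_neg]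
          intro hle
          have := Finsupp.single_le_iff.1 hle
          simp at this
        rw [Finset.sum_congr rfl fun i _ => this i]
        rw [hf 0 (by simp [dg]), Finset.sum_const_zero]
      · have hne : α.support.Nonempty := Finsupp.support_nonempty_iff.2 hα
        set i₀ := α.support.min' hne with hi₀
        have hmin : α.support.min = (i₀ : WithTop (Fin n)) := (Finset.coe_min' hne).symm
        rw [Finset.sum_eq_single i₀]
        · have hle : Finsupp.single i₀ 1 ≤ α := by
            rw [Finsupp.single_le_iff]
            have : i₀ ∈ α.support := Finset.min'_mem _ hne
            rw [Finsupp.mem_support_iff] at this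
            omega
          rw [hterm i₀, if_pos hle, hcoeff, tsub_add_cancel_of_le hle, if_pos hmin]
        · intro i _ hi
          rw [hterm i]
          split_ifs with hle
          · rw [hcoeff, tsub_add_cancel_of_le hle, if_neg]
            rw [hmin]
            intro hcontra
            exact hi (by exact_mod_cast hcontra.symm)
          · rfl
        · intro h
          exact absurd (Finset.mem_univ i₀) h
    rw [heq]
    refine Ideal.sum_mem _ fun i _ => ?_
    rw [pow_succ']
    refine Ideal.mul_mem_mul (Ideal.subset_span ⟨i, rfl⟩) (ih ?_)
    intro γ hγ
    rw [hcoeff]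
    split_ifs with hc
    · refine hf _ ?_
      rw [dg_add, dg_single]
      omega
    · rfl

end Series

section Ideals

variable {K : Type*} [Field K]

/-- diagram of initial exponents -/
def nI (J : Ideal (MvPowerSeries (Fin n) K)) : Set (Fin n →₀ ℕ) :=
  {α | ∃ f ∈ J, coeff α f ≠ 0 ∧ ∀ β, coeff β f ≠ 0 → key α ≤ key β}

/-- ideal of initial monomials -/
noncomputable def monI (I : Ideal (MvPowerSeries (Fin n) K)) : Ideal (MvPowerSeries (Fin n) K) :=
  Ideal.span {g | ∃ f ∈ I, ∃ α, (coeff α f ≠ 0 ∧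
    ∀ β, coeff β f ≠ 0 → key α ≤ key β) ∧ g = monomial α (coeff α f)}

theorem nI_add_mem {J : Ideal (MvPowerSeries (Fin n) K)} {α : Fin n →₀ ℕ}
    (hα : α ∈ nI J) (γ : Fin n →₀ ℕ) : γ + α ∈ nI J := by
  obtain ⟨f, hfJ, hfc, hfmin⟩ := hα
  refine ⟨monomial γ 1 * f, Ideal.mul_mem_left _ _ hfJ, ?_, ?_⟩
  · rw [show γ + α = γ + α from rfl, coeff_add_monomial_mul, one_mul]
    exact hfc
  · intro β hβ
    rw [coeff_monomial_mul] at hβ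
    split_ifs at hβ with hle
    · rw [one_mul] at hβ
      have h1 : key α ≤ key (β - γ) := hfmin _ hβ
      have h2 : key (γ + α) ≤ key (γ + (β - γ)) := (key_add_le_iff γ).2 h1
      rwa [add_tsub_cancel_of_le hle] at h2
    · exact absurd rfl hβ

theorem coeff_monI_mem {I : Ideal (MvPowerSeries (Fin n) K)} {g : MvPowerSeries (Fin n) K}
    (hg : g ∈ monI I) : ∀ β, coeff β g ≠ 0 → β ∈ nI I := by
  classical
  refine Submodule.span_induction ?_ ?_ ?_ ?_ hg
  · rintro x ⟨f, hfI, α, ⟨hfc, hfmin⟩, rfl⟩ β hβ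
    rw [coeff_monomial] at hβ
    split_ifs at hβ with he
    · subst he
      exact ⟨f, hfI, hfc, hfmin⟩
    · exact absurd rfl hβ
  · intro β hβ
    simp at hβ
  · intro x y _ _ hx hy β hβ
    rw [map_add] at hβ
    by_cases hxc : coeff β x = 0
    · exact hy β (by intro h; rw [hxc, h, add_zero] at hβ; exact hβ rfl)
    · exact hx β hxc
  · intro r x _ hx β hβ
    rw [smul_eq_mul, coeff_mul] at hβ
    obtain ⟨p, hp, hpne⟩ := Finset.exists_ne_zero_of_sum_ne_zero hβ
    rw [Finset.HasAntidiagonal.mem_antidiagonal] at hp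
    have h2 : coeff p.2 x ≠ 0 := right_ne_zero_of_mul hpne
    have := nI_add_mem (hx p.2 h2) p.1
    rwa [hp] at this

theorem nI_monI (I : Ideal (MvPowerSeries (Fin n) K)) : nI (monI I) = nI I := by
  ext α
  constructor
  · rintro ⟨g, hg, hgc, _⟩
    exact coeff_monI_mem hg α hgc
  · rintro ⟨f, hfI, hfc, hfmin⟩
    refine ⟨monomial α (coeff α f), Ideal.subset_span ⟨f, hfI, α, ⟨hfc, hfmin⟩, rfl⟩, ?_, ?_⟩
    · rwa [coeff_monomial_same]
    · intro β hβ
      rw [coeff_monomial] at hβ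
      split_ifs at hβ with he
      · rw [he]
      · exact absurd rfl hβ

end Ideals

section Main

variable {K : Type*} [Field K]

variable (J : Ideal (MvPowerSeries (Fin n) K)) (k : ℕ)

/-- the ideal we quotient by -/
noncomputable def Jk : Ideal (MvPowerSeries (Fin n) K) := J ⊔ (mI K n) ^ (k + 1)

/-- index set of the basis -/
def SS : Set (Fin n →₀ ℕ) := {α | α ∉ nI J ∧ dg α ≤ k}

theorem SS_finite : (SS J k).Finite := (finite_dg_le k).subset fun _ h => h.2

/-- the basis candidate -/
noncomputable def bas : SS J k → (MvPowerSeries (Fin n) K ⧸ Jk J k) :=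
  fun α => Ideal.Quotient.mkₐ K (Jk J k) (monomial (α : Fin n →₀ ℕ) 1)

theorem mI_pow_le_Jk : (mI K n) ^ (k + 1) ≤ Jk J k := le_sup_right

theorem J_le_Jk : J ≤ Jk J k := le_sup_left

theorem span_red0 (f : MvPowerSeries (Fin n) K)
    (hf : ∀ β, coeff β f ≠ 0 → dg β ≤ k → β ∉ nI J) :
    Ideal.Quotient.mkₐ K (Jk J k) f ∈ Submodule.span K (Set.range (bas J k)) := by
  classical
  set Dk : Finset (Fin n →₀ ℕ) :=
    (finite_dg_le (n := n) k).toFinset.filter (fun α => coeff α f ≠ 0) with hDk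
  have hmemDk : ∀ α, α ∈ Dk ↔ (dg α ≤ k ∧ coeff α f ≠ 0) := by
    intro α
    simp [hDk, Set.Finite.mem_toFinset]
  set p : MvPowerSeries (Fin n) K := ∑ α ∈ Dk, monomial α (coeff α f) with hp
  have hpcoeff : ∀ β, coeff β p = if β ∈ Dk then coeff β f else 0 := by
    intro β
    rw [hp, map_sum]
    by_cases hβ : β ∈ Dk
    · rw [if_pos hβ, Finset.sum_eq_single β]
      · rw [coeff_monomial_same]
      · intro α _ hne
        rw [coeff_monomial, if_neg (by exact fun h => hne h.symm)]
      · intro h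
        exact absurd hβ h
    · rw [if_neg hβ]
      refine Finset.sum_eq_zero fun α hα => ?_
      rw [coeff_monomial, if_neg]
      intro h
      rw [← h] at hα
      exact hβ hα
  have hsub : f - p ∈ (mI K n) ^ (k + 1) := by
    refine mem_mI_pow_of fun β hβ => ?_
    rw [map_sub, hpcoeff β]
    by_cases hc : coeff β f = 0
    · rw [hc]
      split_ifs <;> simp
    · rw [if_pos ((hmemDk β).2 ⟨by omega, hc⟩), sub_self]
  have hmk : Ideal.Quotient.mkₐ K (Jk J k) f = Ideal.Quotient.mkₐ K (Jk J k) p := by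
    have : (Ideal.Quotient.mk (Jk J k)) f = (Ideal.Quotient.mk (Jk J k)) p :=
      (Ideal.Quotient.mk_eq_mk_iff_sub_mem f p).2 (mI_pow_le_Jk J k hsub)
    exact this
  rw [hmk, hp, map_sum]
  refine Submodule.sum_mem _ fun α hα => ?_
  have hαD := (hmemDk α).1 hα
  have hαS : α ∈ SS J k := ⟨hf α hαD.2 hαD.1, hαD.1⟩
  have : monomial α (coeff α f) = (coeff α f) • monomial α (1 : K) := by
    rw [← map_smul, smul_eq_mul, mul_one]
  rw [this, map_smul]
  exact Submodule.smul_mem _ _ (Submodule.subset_span ⟨⟨α, hαS⟩, rfl⟩)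

end Main

section Main2

variable {K : Type*} [Field K]

variable (J : Ideal (MvPowerSeries (Fin n) K)) (k : ℕ)

theorem Bk_finite : {α : Fin n →₀ ℕ | α ∈ nI J ∧ dg α ≤ k}.Finite :=
  (finite_dg_le k).subset fun _ h => h.2

/-- bad exponents of degree at most k -/
noncomputable def Bk : Finset (Fin n →₀ ℕ) := (Bk_finite J k).toFinset

theorem mem_Bk {α : Fin n →₀ ℕ} : α ∈ Bk J k ↔ α ∈ nI J ∧ dg α ≤ k := by
  rw [Bk, Set.Finite.mem_toFinset]
  rfl

open scoped Classical in
/-- height of an exponent in the bad set -/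
noncomputable def ht (β : Fin n →₀ ℕ) : ℕ :=
  ((Bk J k).filter (fun γ => key γ < key β)).card

theorem ht_lt {α β : Fin n →₀ ℕ} (hα : α ∈ Bk J k) (h : key α < key β) :
    ht J k α < ht J k β := by
  classical
  refine Finset.card_lt_card ?_
  rw [Finset.ssubset_iff_of_subset]
  · exact ⟨α, Finset.mem_filter.2 ⟨hα, h⟩, fun hmem => by
      have := (Finset.mem_filter.1 hmem).2
      exact (klt_iff_not_kle.1 this) (kle_refl α)⟩
  · intro γ hγ
    rw [Finset.mem_filter] at hγ ⊢
    exact ⟨hγ.1, klt_of_klt_of_kle hγ.2 (kle_of_klt h)⟩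

theorem ht_lt_card {β : Fin n →₀ ℕ} (hβ : β ∈ Bk J k) : ht J k β < (Bk J k).card := by
  classical
  refine Finset.card_lt_card ?_
  rw [Finset.ssubset_iff_of_subset (Finset.filter_subset _ _)]
  exact ⟨β, hβ, fun hmem => (klt_iff_not_kle.1 (Finset.mem_filter.1 hmem).2) (kle_refl β)⟩

theorem span_red (j : ℕ) : ∀ (m : ℕ) (f : MvPowerSeries (Fin n) K),
    (Bk J k).card ≤ m + j →
    (∀ β, coeff β f ≠ 0 → β ∈ nI J → dg β ≤ k → m ≤ ht J k β) →
    Ideal.Quotient.mkₐ K (Jk J k) f ∈ Submodule.span K (Set.range (bas J k)) := by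
  classical
  induction j with
  | zero =>
    intro m f hcard hbad
    refine span_red0 J k f fun β h1 h2 => ?_
    by_contra hmem
    have hβB : β ∈ Bk J k := (mem_Bk J k).2 ⟨hmem, h2⟩
    have h3 := hbad β h1 hmem h2
    have h4 := ht_lt_card J k hβB
    omega
  | succ j ih =>
    intro m f hcard hbad
    by_cases hbadex : ∃ β, coeff β f ≠ 0 ∧ β ∈ nI J ∧ dg β ≤ k
    · obtain ⟨α, hα, hmin⟩ := exists_key_min hbadex
      obtain ⟨hαc, hαN, hαd⟩ := hα
      obtain ⟨g₀, hg₀J, hg₀c, hg₀min⟩ := hαN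
      set c : K := coeff α f / coeff α g₀ with hc
      set f' : MvPowerSeries (Fin n) K := f - c • g₀ with hf'
      have hcoeff' : ∀ β, coeff β f' = coeff β f - c * coeff β g₀ := by
        intro β
        rw [hf', map_sub, map_smul, smul_eq_mul]
      have hmk : Ideal.Quotient.mkₐ K (Jk J k) f' = Ideal.Quotient.mkₐ K (Jk J k) f := by
        have : (Ideal.Quotient.mk (Jk J k)) f' = (Ideal.Quotient.mk (Jk J k)) f := by
          rw [Ideal.Quotient.mk_eq_mk_iff_sub_mem]
          have : f' - f = -(c • g₀) := by rw [hf']; ring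
          rw [this]
          exact neg_mem (J_le_Jk J k (Submodule.smul_of_tower_mem J c hg₀J))
        exact this
      rw [← hmk]
      refine ih (m + 1) f' (by omega) ?_
      intro β hb1 hb2 hb3
      have hkey : key α < key β := by
        rcases key_trichot β α with h | h | h
        · exfalso
          have hg0 : coeff β g₀ = 0 := by
            by_contra hg0
            exact (klt_iff_not_kle.1 h) (hg₀min β hg0)
          have hfc : coeff β f ≠ 0 := by
            intro hfc
            rw [hcoeff' β, hfc, hg0, mul_zero, sub_zero] at hb1
            exact hb1 rfl
          exact (klt_iff_not_kle.1 h) (hmin β ⟨hfc, hb2, hb3⟩)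
        · exfalso
          rw [h] at hb1
          rw [hcoeff' α, hc, div_mul_cancel₀ _ hg₀c, sub_self] at hb1
          exact hb1 rfl
        · exact h
      have hαB : α ∈ Bk J k := (mem_Bk J k).2 ⟨⟨g₀, hg₀J, hg₀c, hg₀min⟩, hαd⟩
      have h5 := ht_lt J k hαB hkey
      have h6 := hbad α hαc ⟨g₀, hg₀J, hg₀c, hg₀min⟩ hαd
      omega
    · push_neg at hbadex
      refine span_red0 J k f fun β h1 h2 hmem => ?_
      have := hbadex β h1 hmem
      omega

theorem span_top : ⊤ ≤ Submodule.span K (Set.range (bas J k)) := by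
  intro x _
  obtain ⟨f, rfl⟩ := Ideal.Quotient.mk_surjective x
  exact span_red J k ((Bk J k).card) 0 f (by omega) (fun β _ _ _ => Nat.zero_le _)

end Main2

section Main3

variable {K : Type*} [Field K]

variable (J : Ideal (MvPowerSeries (Fin n) K)) (k : ℕ)

theorem bas_linearIndependent : LinearIndependent K (bas J k) := by
  classical
  rw [linearIndependent_iff']
  intro s g hsum
  by_contra hcon
  push_neg at hcon
  obtain ⟨i₁, hi₁s, hi₁⟩ := hcon
  set p : MvPowerSeries (Fin n) K :=
    ∑ j ∈ s, monomial ((j : { x // x ∈ SS J k }) : Fin n →₀ ℕ) (g j) with hp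
  have hpcoeff : ∀ (j : { x // x ∈ SS J k }), j ∈ s →
      coeff (j : Fin n →₀ ℕ) p = g j := by
    intro j hj
    rw [hp, map_sum, Finset.sum_eq_single j]
    · rw [coeff_monomial_same]
    · intro a _ hne
      rw [coeff_monomial, if_neg]
      intro h
      exact hne (Subtype.ext h.symm)
    · intro h
      exact absurd hj h
  have hpcoeff0 : ∀ β : Fin n →₀ ℕ, coeff β p ≠ 0 →
      ∃ j ∈ s, (j : Fin n →₀ ℕ) = β ∧ g j ≠ 0 := by
    intro β hβ
    rw [hp, map_sum] at hβ
    obtain ⟨j, hjs, hjne⟩ := Finset.exists_ne_zero_of_sum_ne_zero hβ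
    rw [coeff_monomial] at hjne
    split_ifs at hjne with he
    · exact ⟨j, hjs, he.symm, hjne⟩
    · exact absurd rfl hjne
  have hpJk : p ∈ Jk J k := by
    have : Ideal.Quotient.mk (Jk J k) p = 0 := by
      have : Ideal.Quotient.mkₐ K (Jk J k) p = ∑ j ∈ s, g j • bas J k j := by
        rw [hp, map_sum]
        refine Finset.sum_congr rfl fun j _ => ?_
        have : monomial ((j : { x // x ∈ SS J k }) : Fin n →₀ ℕ) (g j) =
            g j • monomial ((j : { x // x ∈ SS J k }) : Fin n →₀ ℕ) (1 : K) := by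
          rw [← map_smul, smul_eq_mul, mul_one]
        rw [this, map_smul]
        rfl
      rw [show Ideal.Quotient.mk (Jk J k) p = Ideal.Quotient.mkₐ K (Jk J k) p from rfl, this, hsum]
    rwa [Ideal.Quotient.eq_zero_iff_mem] at this
  obtain ⟨gJ, hgJ, h, hh, hsum2⟩ := Submodule.mem_sup.1 hpJk
  -- the set of exponents with nonzero coefficient in the combination
  have hTne : {β : Fin n →₀ ℕ | ∃ j ∈ s, (j : Fin n →₀ ℕ) = β ∧ g j ≠ 0}.Nonempty :=
    ⟨(i₁ : Fin n →₀ ℕ), i₁, hi₁s, rfl, hi₁⟩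
  obtain ⟨α₀, hα₀, hα₀min⟩ := exists_key_min hTne
  obtain ⟨j₀, hj₀s, hj₀e, hj₀ne⟩ := hα₀
  have hα₀S : α₀ ∈ SS J k := hj₀e ▸ (j₀ : { x // x ∈ SS J k }).2
  have hα₀p : coeff α₀ p ≠ 0 := by
    rw [← hj₀e, hpcoeff j₀ hj₀s]
    exact hj₀ne
  have hα₀h : coeff α₀ h = 0 :=
    coeff_eq_zero_of_mem_mI_pow hh α₀ (by have := hα₀S.2; omega)
  have hgJeq : gJ = p - h := by
    rw [← hsum2]; ring
  have hα₀gJ : coeff α₀ gJ ≠ 0 := by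
    rw [hgJeq, map_sub, hα₀h, sub_zero]
    exact hα₀p
  have hmin : ∀ β, coeff β gJ ≠ 0 → key α₀ ≤ key β := by
    intro β hβ
    by_contra hnle
    have hβα₀ : key β < key α₀ := klt_iff_not_kle.2 hnle
    have hdβ : dg β ≤ k := le_trans (dg_le_of_key_le (kle_of_klt hβα₀)) hα₀S.2
    have hβh : coeff β h = 0 := coeff_eq_zero_of_mem_mI_pow hh β (by omega)
    have hβp : coeff β p = 0 := by
      by_contra hβp
      obtain ⟨j, hjs, hje, hjne⟩ := hpcoeff0 β hβp
      have : key α₀ ≤ key β := hα₀min β ⟨j, hjs, hje, hjne⟩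
      exact (klt_iff_not_kle.1 hβα₀) this
    rw [hgJeq, map_sub, hβp, hβh, sub_zero] at hβ
    exact hβ rfl
  exact hα₀S.1 ⟨gJ, hgJ, hα₀gJ, hmin⟩

theorem finrank_quot :
    Module.finrank K (MvPowerSeries (Fin n) K ⧸ Jk J k) = Set.ncard (SS J k) := by
  classical
  letI : Fintype (SS J k) := (SS_finite J k).fintype
  have hb : Module.Basis (SS J k) K (MvPowerSeries (Fin n) K ⧸ Jk J k) :=
    Module.Basis.mk (bas_linearIndependent J k) (span_top J k)
  rw [Module.finrank_eq_card_basis hb, ← Nat.card_coe_set_eq, Nat.card_eq_fintype_card]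

end Main3

end Stmt8Aux

open MvPowerSeries

/-- For an ideal `I` of `R = K[[x₁,…,x_n]]`, with monomials ordered
lexicographically by `(|α|, α₁, …, α_n)`: for every `k`, the Hilbert–Samuel
function `H_I(k) := dim_K R/(I + 𝔫^{k+1})` satisfies `H_I(k) = H_{mon(I)}(k)`,
and this equals the number of exponents `α ∉ N(I)` with `|α| ≤ k`, where
`N(I)` is the diagram of initial exponents of `I` and `mon(I)` the ideal of
initial monomials. -/
theorem stmt_8 (K : Type*) [Field K] (n : ℕ)
    (I : Ideal (MvPowerSeries (Fin n) K)) :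
    let R := MvPowerSeries (Fin n) K
    let nn : Ideal R := Ideal.span (Set.range (X : Fin n → R))
    let deg : (Fin n →₀ ℕ) → ℕ := fun α => α.sum fun _ v => v
    let keyle : (Fin n →₀ ℕ) → (Fin n →₀ ℕ) → Prop := fun α β =>
      (toLex (deg α, toLex ⇑α) : ℕ ×ₗ Lex (Fin n → ℕ)) ≤ toLex (deg β, toLex ⇑β)
    let isExp : R → (Fin n →₀ ℕ) → Prop := fun f α =>
      coeff α f ≠ 0 ∧ ∀ β, coeff β f ≠ 0 → keyle α β
    let NI : Set (Fin n →₀ ℕ) := {α | ∃ f ∈ I, isExp f α}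
    let monI : Ideal R :=
      Ideal.span {g | ∃ f ∈ I, ∃ α, isExp f α ∧ g = monomial α (coeff α f)}
    let HS : Ideal R → ℕ → ℕ := fun J k =>
      Module.finrank K (R ⧸ (J ⊔ nn ^ (k + 1)))
    ∀ k : ℕ, HS I k = HS monI k ∧
      HS I k = Set.ncard {α : Fin n →₀ ℕ | α ∉ NI ∧ deg α ≤ k} := by
  intro R nn deg keyle isExp NI monI HS k
  constructor
  · have h1 := Stmt8Aux.finrank_quot I k
    have h2 := Stmt8Aux.finrank_quot (Stmt8Aux.monI I) k
    have h3 : Stmt8Aux.SS (Stmt8Aux.monI I) k = Stmt8Aux.SS I k := by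
      rw [Stmt8Aux.SS, Stmt8Aux.SS, Stmt8Aux.nI_monI]
    rw [h3] at h2
    exact h1.trans h2.symm
  · exact Stmt8Aux.finrank_quot I k
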